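/- Let H and D be complex Hilbert spaces, U a unitary operator on H, B : D → H a linear isometry, Γ a strict contraction on D, and T := U + B(Γ − I)B*U (a contraction). Then for every z in the open unit disc 𝔻 the operator I − F₁(z)(Γ* − I) is invertible and B*(−T + zD_{T*}(I − zT*)⁻¹D_T)U*B = −Γ + D_{Γ*}[I − F₁(z)(Γ* − I)]⁻¹F₁(z)D_Γ, where F₁(z) := zB*(I − zU*)⁻¹U*B. -/

import Mathlib

set_option synthInstance.maxHeartbeats 1000000
set_option maxHeartbeats 2000000

open ContinuousLinearMap

section AuxCFF

variable {E F : Type*} [NormedAddCommGroup E] [InnerProductSpace ℂ E] [CompleteSpace E]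
    [NormedAddCommGroup F] [InnerProductSpace ℂ F] [CompleteSpace F]

private theorem cff_swap_aux (X : E →L[ℂ] F) (C : F →L[ℂ] E) (V : F →L[ℂ] F)
    (h1 : ((1 : F →L[ℂ] F) - X ∘L C) ∘L V = 1) (h2 : V ∘L ((1 : F →L[ℂ] F) - X ∘L C) = 1) :
    ((1 : E →L[ℂ] E) - C ∘L X) ∘L (1 + C ∘L V ∘L X) = 1 ∧
      ((1 : E →L[ℂ] E) + C ∘L V ∘L X) ∘L (1 - C ∘L X) = 1 := by
  have h1' : ∀ y, V y - X (C (V y)) = y := fun y => by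
    simpa [sub_apply, comp_apply, one_apply] using ContinuousLinearMap.ext_iff.mp h1 y
  have h2' : ∀ y, V (y - X (C y)) = y := fun y => by
    simpa [sub_apply, comp_apply, one_apply] using ContinuousLinearMap.ext_iff.mp h2 y
  constructor
  · ext x
    simp only [comp_apply, add_apply, sub_apply, ContinuousLinearMap.one_apply, map_add, map_sub]
    have e1 := congrArg C (h1' (X x))
    rw [map_sub] at e1
    linear_combination (norm := module) e1
  · ext x
    simp only [comp_apply, add_apply, sub_apply, ContinuousLinearMap.one_apply, map_add, map_sub]
    have e2 := congrArg C (h2' (X x))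
    rw [map_sub, map_sub] at e2
    linear_combination (norm := module) e2

private theorem cff_isUnit_swap (X : E →L[ℂ] F) (C : F →L[ℂ] E)
    (h : IsUnit ((1 : F →L[ℂ] F) - X ∘L C)) : IsUnit ((1 : E →L[ℂ] E) - C ∘L X) := by
  have h1 : ((1 : F →L[ℂ] F) - X ∘L C) ∘L Ring.inverse ((1 : F →L[ℂ] F) - X ∘L C) = 1 := by
    rw [← mul_def]; exact Ring.mul_inverse_cancel _ h
  have h2 : Ring.inverse ((1 : F →L[ℂ] F) - X ∘L C) ∘L ((1 : F →L[ℂ] F) - X ∘L C) = 1 := by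
    rw [← mul_def]; exact Ring.inverse_mul_cancel _ h
  obtain ⟨e1, e2⟩ := cff_swap_aux X C _ h1 h2
  exact ⟨⟨1 - C ∘L X, 1 + C ∘L Ring.inverse ((1 : F →L[ℂ] F) - X ∘L C) ∘L X,
    by rw [mul_def]; exact e1, by rw [mul_def]; exact e2⟩, rfl⟩

private theorem cff_intertwine (X : E →L[ℂ] F) (C : F →L[ℂ] E)
    (h1 : IsUnit ((1 : F →L[ℂ] F) - X ∘L C)) (h2 : IsUnit ((1 : E →L[ℂ] E) - C ∘L X)) :
    Ring.inverse ((1 : F →L[ℂ] F) - X ∘L C) ∘L X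
      = X ∘L Ring.inverse ((1 : E →L[ℂ] E) - C ∘L X) := by
  have h1l : ∀ y, Ring.inverse ((1 : F →L[ℂ] F) - X ∘L C) (y - X (C y)) = y := fun y => by
    have := ContinuousLinearMap.ext_iff.mp
      (by rw [← mul_def]; exact Ring.inverse_mul_cancel _ h1 :
        Ring.inverse ((1 : F →L[ℂ] F) - X ∘L C) ∘L ((1 : F →L[ℂ] F) - X ∘L C) = 1) y
    simpa [sub_apply, comp_apply, one_apply] using this
  have h2r : ∀ x, Ring.inverse ((1 : E →L[ℂ] E) - C ∘L X) x
      - C (X (Ring.inverse ((1 : E →L[ℂ] E) - C ∘L X) x)) = x := fun x => by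
    have := ContinuousLinearMap.ext_iff.mp
      (by rw [← mul_def]; exact Ring.mul_inverse_cancel _ h2 :
        ((1 : E →L[ℂ] E) - C ∘L X) ∘L Ring.inverse ((1 : E →L[ℂ] E) - C ∘L X) = 1) x
    simpa [sub_apply, comp_apply, one_apply] using this
  ext x
  simp only [comp_apply]
  have e : X x = X (Ring.inverse ((1 : E →L[ℂ] E) - C ∘L X) x)
      - X (C (X (Ring.inverse ((1 : E →L[ℂ] E) - C ∘L X) x))) := by
    rw [← map_sub, h2r x]
  rw [e, h1l]

private theorem cff_ring_inverse_mul {M₀ : Type*} [MonoidWithZero M₀] (a b : M₀)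
    (ha : IsUnit a) (hb : IsUnit b) :
    Ring.inverse (a * b) = Ring.inverse b * Ring.inverse a := by
  obtain ⟨u, rfl⟩ := ha; obtain ⟨v, rfl⟩ := hb
  rw [← Units.val_mul, Ring.inverse_unit, Ring.inverse_unit, Ring.inverse_unit,
    mul_inv_rev, Units.val_mul]

private theorem cff_defect_nonneg (A : E →L[ℂ] E) (hA : ‖A‖ ≤ 1) :
    (0 : E →L[ℂ] E) ≤ 1 - star A * A := by
  rw [nonneg_iff_isPositive]
  constructor
  · rw [← isSelfAdjoint_iff_isSymmetric, IsSelfAdjoint]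
    simp [star_sub, star_mul]
  · intro x
    rw [reApplyInnerSelf_apply]
    have e : ((1 : E →L[ℂ] E) - star A * A) x = x - adjoint A (A x) := by
      simp [star_eq_adjoint, mul_def]
    rw [e, inner_sub_left, map_sub, adjoint_inner_left,
      inner_self_eq_norm_sq (𝕜 := ℂ), inner_self_eq_norm_sq (𝕜 := ℂ)]
    have h1 : ‖A x‖ ≤ ‖x‖ := by
      calc ‖A x‖ ≤ ‖A‖ * ‖x‖ := le_opNorm A x
        _ ≤ 1 * ‖x‖ := by gcongr
        _ = ‖x‖ := one_mul _
    nlinarith [norm_nonneg (A x), norm_nonneg x]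

private theorem cff_sqrt_conj (V : E →L[ℂ] F) (hV : adjoint V ∘L V = 1) (A : E →L[ℂ] E)
    (hA : (0 : E →L[ℂ] E) ≤ A) :
    CFC.sqrt (V ∘L A ∘L adjoint V) = V ∘L CFC.sqrt A ∘L adjoint V := by
  have hs : (0 : E →L[ℂ] E) ≤ CFC.sqrt A := CFC.sqrt_nonneg A
  have hpos : (0 : F →L[ℂ] F) ≤ V ∘L CFC.sqrt A ∘L adjoint V := by
    rw [nonneg_iff_isPositive]
    exact ((nonneg_iff_isPositive _).mp hs).conj_adjoint V
  refine CFC.sqrt_unique ?_ hpos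
  have e : (V ∘L CFC.sqrt A ∘L adjoint V) * (V ∘L CFC.sqrt A ∘L adjoint V)
      = V ∘L (CFC.sqrt A ∘L ((adjoint V ∘L V) ∘L CFC.sqrt A)) ∘L adjoint V := by
    rw [mul_def]; simp only [comp_assoc]
  rw [e, hV]
  have h2 : CFC.sqrt A ∘L ((1 : E →L[ℂ] E) ∘L CFC.sqrt A) = A := by
    rw [one_def, id_comp, ← mul_def, CFC.sqrt_mul_sqrt_self A hA]
  rw [h2]

private theorem cff_norm_le_one (A : E →L[ℂ] E)
    (h : (0 : E →L[ℂ] E) ≤ 1 - star A * A) : ‖A‖ ≤ 1 := by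
  rw [nonneg_iff_isPositive] at h
  refine opNorm_le_bound _ zero_le_one fun x => ?_
  have h2 := h.2 x
  rw [reApplyInnerSelf_apply] at h2
  have e : ((1 : E →L[ℂ] E) - star A * A) x = x - adjoint A (A x) := by
    simp [star_eq_adjoint, mul_def]
  rw [e, inner_sub_left, map_sub, adjoint_inner_left,
    inner_self_eq_norm_sq (𝕜 := ℂ), inner_self_eq_norm_sq (𝕜 := ℂ)] at h2
  rw [one_mul]
  nlinarith [norm_nonneg (A x), norm_nonneg x]

end AuxCFF
/-- Equation (4.3)/(A.2): the characteristic function of the contraction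
`T = U + B (Γ - I) B* U` (with `U` unitary, `B` an isometry, `Γ` a strict contraction)
satisfies
`B* (-T + z D_{T*} (I - z T*)⁻¹ D_T) U* B = -Γ + D_{Γ*} [I - F₁(z)(Γ* - I)]⁻¹ F₁(z) D_Γ`,
where `F₁(z) = z B* (I - z U*)⁻¹ U* B`, `D_A = (I - A*A)^{1/2}`, and
`I - F₁(z)(Γ* - I)` is invertible for `z` in the open unit disc. -/
theorem characteristic_function_formula'
    {H D : Type*} [NormedAddCommGroup H] [InnerProductSpace ℂ H] [CompleteSpace H]
    [NormedAddCommGroup D] [InnerProductSpace ℂ D] [CompleteSpace D]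
    (U : H →L[ℂ] H) (hU : U ∈ unitary (H →L[ℂ] H))
    (B : D →L[ℂ] H) (hB : ∀ x : D, ‖B x‖ = ‖x‖)
    (Γ : D →L[ℂ] D) (hΓ : ∀ x : D, x ≠ 0 → ‖Γ x‖ < ‖x‖)
    (T : H →L[ℂ] H) (hT : T = U + B ∘L (Γ - 1) ∘L adjoint B ∘L U)
    (z : ℂ) (hz : ‖z‖ < 1)
    (F₁ : D →L[ℂ] D)
    (hF₁ : F₁ = z • (adjoint B ∘L Ring.inverse (1 - z • adjoint U) ∘L adjoint U ∘L B)) :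
    IsUnit ((1 : D →L[ℂ] D) - F₁ ∘L (adjoint Γ - 1)) ∧
    adjoint B ∘L
        (-T + z • (CFC.sqrt (1 - T * star T) ∘L Ring.inverse (1 - z • adjoint T) ∘L
          CFC.sqrt (1 - star T * T))) ∘L adjoint U ∘L B =
      -Γ + CFC.sqrt (1 - Γ * star Γ) ∘L
        Ring.inverse ((1 : D →L[ℂ] D) - F₁ ∘L (adjoint Γ - 1)) ∘L F₁ ∘L
          CFC.sqrt (1 - star Γ * Γ) := by
  -- ## Basic facts
  have hBB : adjoint B ∘L B = 1 := by
    ext x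
    apply ext_inner_right ℂ
    intro y
    simp only [comp_apply, adjoint_inner_left, one_apply]
    exact (LinearMap.norm_map_iff_inner_map_map B).mp hB x y
  have hBBp : ∀ x, adjoint B (B x) = x := fun x => by
    simpa using ContinuousLinearMap.ext_iff.mp hBB x
  obtain ⟨hu1, hu2⟩ := Unitary.mem_iff.mp hU
  have huu : adjoint U ∘L U = 1 := by
    rw [← mul_def, ← star_eq_adjoint]; exact hu1
  have huu' : U ∘L adjoint U = 1 := by
    rw [← mul_def, ← star_eq_adjoint]; exact hu2
  have huup : ∀ x, adjoint U (U x) = x := fun x => by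
    simpa using ContinuousLinearMap.ext_iff.mp huu x
  have huu'p : ∀ x, U (adjoint U x) = x := fun x => by
    simpa using ContinuousLinearMap.ext_iff.mp huu' x
  have hone : ContinuousLinearMap.adjoint (1 : D →L[ℂ] D) = 1 := by
    rw [← star_eq_adjoint, star_one]
  -- ## adjoint of T
  have hTa : adjoint T = adjoint U + (adjoint U ∘L B) ∘L ((adjoint Γ - 1) ∘L adjoint B) := by
    rw [hT, map_add]
    congr 1
    calc ContinuousLinearMap.adjoint (B ∘L (Γ - 1) ∘L adjoint B ∘L U)
        = adjoint (adjoint B ∘L U) ∘L adjoint (Γ - 1) ∘L adjoint B := by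
          rw [adjoint_comp, adjoint_comp, comp_assoc]
      _ = (adjoint U ∘L B) ∘L ((adjoint Γ - 1) ∘L adjoint B) := by
          rw [adjoint_comp, adjoint_adjoint, map_sub, hone]
  have hTp : ∀ x, T x = U x + B (Γ (adjoint B (U x))) - B (adjoint B (U x)) := fun x => by
    rw [hT]
    simp only [add_apply, comp_apply, sub_apply, one_apply, map_sub]
    abel
  have hTap : ∀ x, adjoint T x
      = adjoint U x + adjoint U (B (adjoint Γ (adjoint B x))) - adjoint U (B (adjoint B x)) :=
    fun x => by
      rw [hTa]
      simp only [add_apply, comp_apply, sub_apply, one_apply, map_sub]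
      abel
  -- ## norm bounds
  have hΓle : ‖Γ‖ ≤ 1 := by
    refine opNorm_le_bound Γ zero_le_one fun x => ?_
    rw [one_mul]
    rcases eq_or_ne x 0 with rfl | hx
    · simp
    · exact (hΓ x hx).le
  have hadjΓ : ‖adjoint Γ‖ = ‖Γ‖ := LinearIsometryEquiv.norm_map adjoint Γ
  have hadjU : ‖adjoint U‖ = ‖U‖ := LinearIsometryEquiv.norm_map adjoint U
  have hadjT : ‖adjoint T‖ = ‖T‖ := LinearIsometryEquiv.norm_map adjoint T
  have hΓ'le : ‖adjoint Γ‖ ≤ 1 := hadjΓ.le.trans hΓle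
  have hdΓ : (0 : D →L[ℂ] D) ≤ 1 - star Γ * Γ := cff_defect_nonneg Γ hΓle
  have hdΓ' : (0 : D →L[ℂ] D) ≤ 1 - Γ * star Γ := by
    have := cff_defect_nonneg (adjoint Γ) hΓ'le
    simpa [star_eq_adjoint, adjoint_adjoint] using this
  -- ## the two defect identities
  have h1TT : (1 : H →L[ℂ] H) - T * star T = B ∘L (1 - Γ * star Γ) ∘L adjoint B := by
    ext x
    simp only [ContinuousLinearMap.sub_apply, ContinuousLinearMap.one_apply, ContinuousLinearMap.mul_apply, comp_apply, star_eq_adjoint, map_sub, hTp, hTap,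
      map_add, hBBp, huup, huu'p]
    abel
  have hVV : adjoint (adjoint U ∘L B) ∘L (adjoint U ∘L B) = 1 := by
    rw [adjoint_comp, adjoint_adjoint]
    ext x
    simp only [comp_apply, ContinuousLinearMap.one_apply, huu'p, hBBp]
  have hVadj : ContinuousLinearMap.adjoint (adjoint U ∘L B) = adjoint B ∘L U := by
    rw [adjoint_comp, adjoint_adjoint]
  have h2TT : (1 : H →L[ℂ] H) - star T * T
      = (adjoint U ∘L B) ∘L (1 - star Γ * Γ) ∘L adjoint (adjoint U ∘L B) := by
    rw [hVadj]
    ext x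
    simp only [ContinuousLinearMap.sub_apply, ContinuousLinearMap.one_apply, ContinuousLinearMap.mul_apply, comp_apply, star_eq_adjoint, map_sub, hTp, hTap,
      map_add, hBBp, huup, huu'p]
    abel
  -- ## square roots
  have e1 : CFC.sqrt ((1 : H →L[ℂ] H) - T * star T)
      = B ∘L CFC.sqrt (1 - Γ * star Γ) ∘L adjoint B := by
    rw [h1TT]; exact cff_sqrt_conj B hBB _ hdΓ'
  have e2 : CFC.sqrt ((1 : H →L[ℂ] H) - star T * T)
      = (adjoint U ∘L B) ∘L CFC.sqrt (1 - star Γ * Γ) ∘L (adjoint B ∘L U) := by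
    rw [h2TT, cff_sqrt_conj _ hVV _ hdΓ, hVadj]
  -- ## T is a contraction
  have hTle : ‖T‖ ≤ 1 := by
    refine cff_norm_le_one T ?_
    rw [h2TT, nonneg_iff_isPositive]
    exact ((nonneg_iff_isPositive _).mp hdΓ).conj_adjoint (adjoint U ∘L B)
  have hUle : ‖U‖ ≤ 1 := by
    refine opNorm_le_bound U zero_le_one fun x => ?_
    rw [one_mul]
    have h2 : ‖U x‖ ^ 2 = ‖x‖ ^ 2 := by
      rw [← inner_self_eq_norm_sq (𝕜 := ℂ), ← inner_self_eq_norm_sq (𝕜 := ℂ),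
        ← adjoint_inner_right, huup x]
    nlinarith [norm_nonneg (U x), norm_nonneg x]
  have hzU : ‖z • adjoint U‖ < 1 := by
    rw [norm_smul]
    calc ‖z‖ * ‖adjoint U‖ ≤ ‖z‖ * 1 := by gcongr; exact hadjU.le.trans hUle
      _ = ‖z‖ := mul_one _
      _ < 1 := hz
  have hzT : ‖z • adjoint T‖ < 1 := by
    rw [norm_smul]
    calc ‖z‖ * ‖adjoint T‖ ≤ ‖z‖ * 1 := by gcongr; exact hadjT.le.trans hTle
      _ = ‖z‖ := mul_one _
      _ < 1 := hz
  have huU : IsUnit ((1 : H →L[ℂ] H) - z • adjoint U) := ⟨Units.oneSub _ hzU, rfl⟩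
  have huT : IsUnit ((1 : H →L[ℂ] H) - z • adjoint T) := ⟨Units.oneSub _ hzT, rfl⟩
  -- ## the resolvent factorisation
  set G := Ring.inverse ((1 : H →L[ℂ] H) - z • adjoint U) with hG
  set X := z • (G ∘L (adjoint U ∘L B)) with hXdef
  set C := (adjoint Γ - 1) ∘L adjoint B with hCdef
  have hGl : ((1 : H →L[ℂ] H) - z • adjoint U) ∘L G = 1 := by
    rw [hG, ← mul_def]; exact Ring.mul_inverse_cancel _ huU
  have hGlp : ∀ y, G y - z • adjoint U (G y) = y := fun y => by
    have := ContinuousLinearMap.ext_iff.mp hGl y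
    simpa [sub_apply, comp_apply, one_apply, smul_apply] using this
  have hfac : ((1 : H →L[ℂ] H) - z • adjoint U) ∘L ((1 : H →L[ℂ] H) - X ∘L C)
      = (1 : H →L[ℂ] H) - z • adjoint T := by
    ext x
    simp only [comp_apply, ContinuousLinearMap.sub_apply, ContinuousLinearMap.one_apply, smul_apply, hXdef, hCdef, hTap,
      map_sub, map_add, map_smul]
    linear_combination (norm := module)
      (-z : ℂ) • hGlp (adjoint U (B (adjoint Γ (adjoint B x))))
        + (z : ℂ) • hGlp (adjoint U (B (adjoint B x)))
  have hfacm : (1 : H →L[ℂ] H) - z • adjoint T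
      = ((1 : H →L[ℂ] H) - z • adjoint U) * ((1 : H →L[ℂ] H) - X ∘L C) := by
    rw [mul_def, hfac]
  have huXC : IsUnit ((1 : H →L[ℂ] H) - X ∘L C) := by
    obtain ⟨uU, huUval⟩ := huU
    have h' : (1 : H →L[ℂ] H) - X ∘L C = ↑uU⁻¹ * ((1 : H →L[ℂ] H) - z • adjoint T) := by
      rw [hfacm, ← huUval, ← mul_assoc, Units.inv_mul, one_mul]
    rw [h']
    exact (uU⁻¹.isUnit).mul huT
  have huCX : IsUnit ((1 : D →L[ℂ] D) - C ∘L X) := cff_isUnit_swap X C huXC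
  have hBX : adjoint B ∘L X = F₁ := by
    rw [hXdef, hF₁]
    ext x
    simp [comp_apply, smul_apply, map_smul]
  have hCXeq : C ∘L X = (adjoint Γ - 1) ∘L F₁ := by
    rw [← hBX, hCdef]
    ext x
    simp [comp_apply]
  have huΓF : IsUnit ((1 : D →L[ℂ] D) - (adjoint Γ - 1) ∘L F₁) := by
    rw [← hCXeq]; exact huCX
  have huFΓ : IsUnit ((1 : D →L[ℂ] D) - F₁ ∘L (adjoint Γ - 1)) :=
    cff_isUnit_swap (adjoint Γ - 1) F₁ huΓF
  refine ⟨huFΓ, ?_⟩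
  -- ## abbreviations for the inverses on D
  set Q := Ring.inverse ((1 : D →L[ℂ] D) - F₁ ∘L (adjoint Γ - 1)) with hQdef
  set P := Ring.inverse ((1 : D →L[ℂ] D) - (adjoint Γ - 1) ∘L F₁) with hPdef
  -- ## the key identity e3
  have hRinv : Ring.inverse ((1 : H →L[ℂ] H) - z • adjoint T)
      = Ring.inverse ((1 : H →L[ℂ] H) - X ∘L C) ∘L G := by
    rw [hfacm, cff_ring_inverse_mul _ _ huU huXC, mul_def, ← hG]
  have c1 : ∀ y, Ring.inverse ((1 : H →L[ℂ] H) - z • adjoint T) y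
      = Ring.inverse ((1 : H →L[ℂ] H) - X ∘L C) (G y) := fun y => by
    have := ContinuousLinearMap.ext_iff.mp hRinv y
    simpa [comp_apply] using this
  have c2 := cff_intertwine X C huXC huCX
  rw [hCXeq, ← hPdef] at c2
  have c2p : ∀ y, Ring.inverse ((1 : H →L[ℂ] H) - X ∘L C) (X y) = X (P y) := fun y => by
    have := ContinuousLinearMap.ext_iff.mp c2 y
    simpa [comp_apply] using this
  have c3p : ∀ y, X y = z • G (adjoint U (B y)) := fun y => by
    rw [hXdef]; simp [comp_apply, smul_apply]
  have c4p : ∀ y, adjoint B (X y) = F₁ y := fun y => by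
    have := ContinuousLinearMap.ext_iff.mp hBX y
    simpa [comp_apply] using this
  have c5 := cff_intertwine F₁ (adjoint Γ - 1) huFΓ huΓF
  rw [← hQdef, ← hPdef] at c5
  have c5p : ∀ y, Q (F₁ y) = F₁ (P y) := fun y => by
    have := ContinuousLinearMap.ext_iff.mp c5 y
    simpa [comp_apply] using this
  have e3p : ∀ y, z • adjoint B (Ring.inverse ((1 : H →L[ℂ] H) - z • adjoint T)
        (adjoint U (B y))) = Q (F₁ y) := fun y => by
    calc z • adjoint B (Ring.inverse ((1 : H →L[ℂ] H) - z • adjoint T) (adjoint U (B y)))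
        = z • adjoint B (Ring.inverse ((1 : H →L[ℂ] H) - X ∘L C) (G (adjoint U (B y)))) := by
          rw [c1]
      _ = adjoint B (Ring.inverse ((1 : H →L[ℂ] H) - X ∘L C) (X y)) := by
          rw [c3p, map_smul, map_smul]
      _ = adjoint B (X (P y)) := by rw [c2p]
      _ = F₁ (P y) := c4p _
      _ = Q (F₁ y) := (c5p y).symm
  -- ## final assembly
  have hTΓp : ∀ x, adjoint B (T (adjoint U (B x))) = Γ x := fun x => by
    rw [hTp]
    simp only [map_add, map_sub, hBBp, huup, huu'p]
    abel
  ext x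
  simp only [comp_apply, ContinuousLinearMap.add_apply, neg_apply, smul_apply, e1, e2, ContinuousLinearMap.one_apply,
    map_add, map_neg, map_smul, hBBp, huup, huu'p]
  rw [hTΓp, ← map_smul (CFC.sqrt ((1 : D →L[ℂ] D) - Γ * star Γ)),
    e3p (CFC.sqrt ((1 : D →L[ℂ] D) - star Γ * Γ) x)]
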